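/- arXiv:math/0609113 — 6 statements merged into one kernel-verified Lean document; each statement's English description precedes it below -/
import Mathlib

section
/- The map f_a(x,y) = (y(x+a)/(x-1), x+a-1) is the composition τ∘σ of the two involutions τ(x,y) = (x(a-y)/(1+y), a-1-y) and σ(x,y) = (-y,-x); moreover τ and σ are each involutions on their domains of definition. -/
/-- The birational map `f_a(x,y) = (y(x+a)/(x-1), x+a-1)`. -/
noncomputable def fa (a : ℝ) (p : ℝ × ℝ) : ℝ × ℝ :=
  (p.2 * (p.1 + a) / (p.1 - 1), p.1 + a - 1)

/-- The involution `τ(x,y) = (x(a-y)/(1+y), a-1-y)`. -/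
noncomputable def tau (a : ℝ) (p : ℝ × ℝ) : ℝ × ℝ :=
  (p.1 * (a - p.2) / (1 + p.2), a - 1 - p.2)

/-- The involution `σ(x,y) = (-y,-x)`. -/
def sigma' (p : ℝ × ℝ) : ℝ × ℝ := (-p.2, -p.1)

/-- `f_a = τ ∘ σ`, and `τ`, `σ` are involutions on their domains of definition. -/
theorem fa_eq_tau_comp_sigma_and_involutions (a : ℝ) :
    (∀ x y : ℝ, x ≠ 1 → tau a (sigma' (x, y)) = fa a (x, y)) ∧
    (∀ x y : ℝ, y ≠ -1 → y ≠ a → tau a (tau a (x, y)) = (x, y)) ∧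
    (∀ x y : ℝ, sigma' (sigma' (x, y)) = (x, y)) := by
  refine ⟨?_, ?_, ?_⟩
  · intro x y hx
    have h1 : (1 : ℝ) - x ≠ 0 := by intro h; apply hx; linarith
    simp only [tau, sigma', fa, Prod.mk.injEq]
    have h2 : x - 1 ≠ 0 := sub_ne_zero.mpr hx
    constructor
    · rw [div_eq_div_iff (by intro h; apply hx; linarith) h2]
      ring
    · ring
  · intro x y h1 h2
    have hy : 1 + y ≠ 0 := by intro h; apply h1; linarith
    have ha : a - y ≠ 0 := by intro h; apply h2; linarith
    simp only [tau, Prod.mk.injEq]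
    constructor
    · have : 1 + (a - 1 - y) = a - y := by ring
      rw [this]
      field_simp
      ring
    · ring
  · intro x y; simp [sigma']
end

section
/- The map f_a preserves the two-form η = dx∧dy/(y-x+1); equivalently, the Jacobian determinant of f_a at (x,y) equals (f_a(x,y)_2 - f_a(x,y)_1 + 1)/(y - x + 1) whenever x ≠ 1 and y - x + 1 ≠ 0. -/
/-- `f_a` preserves the two-form `η = dx∧dy/(y-x+1)`: the Jacobian determinant of
`f_a` at `(x,y)`, multiplied by `y - x + 1`, equals
`(f_a(x,y))_2 - (f_a(x,y))_1 + 1` whenever `x ≠ 1` and `y - x + 1 ≠ 0`. -/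
theorem fa_preserves_eta (a x y : ℝ) (hx : x ≠ 1) (h : y - x + 1 ≠ 0) :
    (deriv (fun s : ℝ => y * (s + a) / (s - 1)) x *
       deriv (fun t : ℝ => x + a - 1) y -
     deriv (fun t : ℝ => t * (x + a) / (x - 1)) y *
       deriv (fun s : ℝ => s + a - 1) x) * (y - x + 1)
    = (x + a - 1) - y * (x + a) / (x - 1) + 1 := by
  have h1 : deriv (fun t : ℝ => x + a - 1) y = 0 := deriv_const _ _
  have h2 : deriv (fun t : ℝ => t * (x + a) / (x - 1)) y = (x + a) / (x - 1) := by
    have : (fun t : ℝ => t * (x + a) / (x - 1)) = fun t : ℝ => ((x + a) / (x - 1)) * t := by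
      funext t; ring
    rw [this, deriv_const_mul_field, deriv_id'', mul_one]
  have h3 : deriv (fun s : ℝ => s + a - 1) x = 1 := by
    have : (fun s : ℝ => s + a - 1) = fun s : ℝ => s + (a - 1) := by funext s; ring
    rw [this]
    simp [deriv_add_const]
  rw [h1, h2, h3]
  have hx1 : x - 1 ≠ 0 := sub_ne_zero.mpr hx
  field_simp
  ring
end

section
/- For a ≥ 0 and a ≠ -1, the eigenvalues of the Jacobian matrix Df_a at the fixed point p_fix = ((1-a)/2,(a-1)/2) are the complex conjugate pair λ = (i+√a)/(i-√a) and its conjugate, each of modulus 1. -/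
open Polynomial

/-- The real Jacobian matrix of `f_a(x,y) = (y(x+a)/(x-1), x+a-1)` at the fixed point
`p_fix = ((1-a)/2, (a-1)/2)`, with entries given by the partial derivatives. -/
noncomputable def Dfa (a : ℝ) : Matrix (Fin 2) (Fin 2) ℝ :=
  !![deriv (fun s : ℝ => ((a - 1) / 2) * (s + a) / (s - 1)) ((1 - a) / 2),
     deriv (fun t : ℝ => t * (((1 - a) / 2) + a) / (((1 - a) / 2) - 1)) ((a - 1) / 2);
     deriv (fun s : ℝ => s + a - 1) ((1 - a) / 2),
     deriv (fun _ : ℝ => ((1 - a) / 2) + a - 1) ((a - 1) / 2)]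



theorem Dfa_eq (a : ℝ) (ha : 0 ≤ a) :
    Dfa a = !![2*(1-a)/(1+a), -1; 1, 0] := by
  have hpos : (0:ℝ) < 1 + a := by linarith
  have h1a : (1:ℝ) + a ≠ 0 := by positivity
  have hne : ((1 - a)/2 : ℝ) - 1 ≠ 0 := by intro h; nlinarith
  have hne2 : ((1 - a)/2 : ℝ) - 1 = -(1+a)/2 := by ring
  unfold Dfa
  have e00 : deriv (fun s : ℝ => ((a - 1) / 2) * (s + a) / (s - 1)) ((1 - a) / 2)
      = 2*(1-a)/(1+a) := by
    have h1 : HasDerivAt (fun s : ℝ => ((a - 1) / 2) * (s + a)) ((a-1)/2) ((1-a)/2) := by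
      simpa using ((hasDerivAt_id ((1-a)/2)).add_const a).const_mul ((a-1)/2)
    have h2 : HasDerivAt (fun s : ℝ => s - 1) 1 ((1-a)/2) := (hasDerivAt_id _).sub_const 1
    have : deriv (fun s : ℝ => ((a - 1) / 2) * (s + a) / (s - 1)) ((1 - a) / 2) = _ := (h1.div h2 hne).deriv
    rw [this, div_eq_div_iff (pow_ne_zero 2 hne) h1a]
    ring
  have e01 : deriv (fun t : ℝ => t * (((1 - a) / 2) + a) / (((1 - a) / 2) - 1)) ((a - 1) / 2)
      = -1 := by
    have h1 : HasDerivAt (fun t : ℝ => t * (((1 - a) / 2) + a) / (((1 - a) / 2) - 1))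
        ((((1 - a) / 2) + a) / (((1 - a) / 2) - 1)) ((a-1)/2) := by
      simpa [div_eq_mul_inv, mul_assoc] using
        (hasDerivAt_id ((a-1)/2)).mul_const ((((1 - a) / 2) + a) * (((1 - a) / 2) - 1)⁻¹)
    rw [h1.deriv]
    rw [div_eq_iff hne]; ring
  have e10 : deriv (fun s : ℝ => s + a - 1) ((1 - a) / 2) = 1 := by
    have : HasDerivAt (fun s : ℝ => s + a - 1) 1 ((1-a)/2) :=
      ((hasDerivAt_id _).add_const a).sub_const 1
    rw [this.deriv]
  rw [e00, e01, e10]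
  simp

theorem eigen_aux (a : ℝ) (ha : 0 ≤ a) :
    ((!![2*(1-a)/(1+a), -1; 1, 0] : Matrix (Fin 2) (Fin 2) ℝ).map (Complex.ofReal)).charpoly =
      (X - C ((Complex.I + Real.sqrt a) / (Complex.I - Real.sqrt a))) *
      (X - C (starRingEnd ℂ ((Complex.I + Real.sqrt a) / (Complex.I - Real.sqrt a)))) ∧
    ‖((Complex.I + Real.sqrt a) / (Complex.I - Real.sqrt a) : ℂ)‖ = 1 := by
  set t : ℂ := (Real.sqrt a : ℂ) with htdef
  have ht2 : t ^ 2 = (a : ℂ) := by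
    rw [htdef, ← Complex.ofReal_pow, Real.sq_sqrt ha]
  have hd : Complex.I - t ≠ 0 := by
    intro h
    have := congrArg Complex.im h
    simp [htdef] at this
  have hd' : -Complex.I - t ≠ 0 := by
    intro h
    have := congrArg Complex.im h
    simp [htdef] at this
  have h1a : (1:ℂ) + a ≠ 0 := by
    intro h
    have := congrArg Complex.re h
    simp at this
    linarith
  have hconj : starRingEnd ℂ ((Complex.I + t) / (Complex.I - t))
      = (t - Complex.I) / (-Complex.I - t) := by
    rw [map_div₀]
    simp [htdef, Complex.conj_I, sub_eq_add_neg]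
    ring_nf
  have hsum : (Complex.I + t) / (Complex.I - t) + (t - Complex.I) / (-Complex.I - t)
      = ((2*(1-a)/(1+a) : ℝ) : ℂ) := by
    rw [div_add_div _ _ hd hd']
    push_cast
    rw [div_eq_div_iff (mul_ne_zero hd hd') h1a]
    linear_combination (-4*(a:ℂ)) * Complex.I_sq - 4 * ht2
  have hprod : (Complex.I + t) / (Complex.I - t) * ((t - Complex.I) / (-Complex.I - t)) = 1 := by
    rw [div_mul_div_comm, div_eq_one_iff_eq (mul_ne_zero hd hd')]
    ring
  constructor
  · have e1 : (1:Polynomial ℂ) = C ((Complex.I + t) / (Complex.I - t)) * C ((t - Complex.I) / (-Complex.I - t)) := by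
      rw [← map_mul, hprod, map_one]
    have e2 : (C (((2*(1-a)/(1+a) : ℝ)) : ℂ) : Polynomial ℂ)
        = C ((Complex.I + t) / (Complex.I - t)) + C ((t - Complex.I) / (-Complex.I - t)) := by
      rw [← map_add, hsum]
    rw [hconj, Matrix.charpoly, Matrix.det_fin_two]
    simp only [Matrix.charmatrix_apply_eq, Matrix.charmatrix_apply_ne _ _ _ (by decide : (0:Fin 2) ≠ 1),
      Matrix.charmatrix_apply_ne _ _ _ (by decide : (1:Fin 2) ≠ 0), Matrix.map_apply, Matrix.of_apply,
      Matrix.cons_val', Matrix.cons_val_zero, Matrix.cons_val_one, Matrix.head_cons,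
      Matrix.empty_val', Matrix.cons_val_fin_one, Matrix.head_fin_const,
      Complex.ofReal_zero, Complex.ofReal_one, Complex.ofReal_neg, map_zero, map_one, map_neg]
    rw [e2]
    linear_combination e1
  · rw [norm_div, div_eq_one_iff_eq (by simpa using hd)]
    simp only [Complex.norm_def, Complex.normSq_apply]
    simp [htdef]

/-- For `a ≥ 0`, `a ≠ -1`, the eigenvalues of `Df_a(p_fix)` (viewed as a complex
matrix) are the complex conjugate pair `λ = (i+√a)/(i-√a)` and its conjugate, each of
modulus 1. -/
theorem eigenvalues_at_fixed_point (a : ℝ) (ha : 0 ≤ a) (ha' : a ≠ -1) :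
    ((Dfa a).map (Complex.ofReal)).charpoly =
      (X - C ((Complex.I + Real.sqrt a) / (Complex.I - Real.sqrt a))) *
      (X - C (starRingEnd ℂ ((Complex.I + Real.sqrt a) / (Complex.I - Real.sqrt a)))) ∧
    ‖((Complex.I + Real.sqrt a) / (Complex.I - Real.sqrt a) : ℂ)‖ = 1 := by
  rw [Dfa_eq a ha]
  exact eigen_aux a ha
end

section
/- For a > 1, every point of T₀⁺ = {(x,y) : x > 1, y > a} has forward orbit under f_a tending to infinity: for any (x,y) ∈ T₀⁺, both coordinates of f_a^n(x,y) tend to +∞ as n → ∞. -/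
open Filter

/-- A sequence that gains at least `c > 0` every two steps tends to infinity. -/
lemma grow_tendsto (g : ℕ → ℝ) (c : ℝ) (hc : 0 < c)
    (h : ∀ n, g n + c ≤ g (n + 2)) : Tendsto g atTop atTop := by
  have key : ∀ n, min (g 0) (g 1) + (n / 2 : ℕ) * c ≤ g n := by
    intro n
    induction n using Nat.strong_induction_on with
    | _ n ih =>
      match n with
      | 0 => simpa using min_le_left (g 0) (g 1)
      | 1 => simpa using min_le_right (g 0) (g 1)
      | (k + 2) =>
        have hk := ih k (by omega)
        have h2 := h k
        have hd : (k + 2) / 2 = k / 2 + 1 := by omega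
        rw [hd]
        push_cast
        nlinarith
  have hdiv : Tendsto (fun n : ℕ => n / 2) atTop atTop :=
    tendsto_atTop_atTop.2 fun b => ⟨2 * b, fun n hn => by omega⟩
  have h1 : Tendsto (fun n : ℕ => ((n / 2 : ℕ) : ℝ)) atTop atTop :=
    tendsto_natCast_atTop_atTop.comp hdiv
  have h2 : Tendsto (fun n : ℕ => min (g 0) (g 1) + ((n / 2 : ℕ) : ℝ) * c) atTop atTop :=
    tendsto_atTop_add_const_left _ _ (h1.atTop_mul_const hc)
  exact tendsto_atTop_mono key h2

/-- For `a > 1`, every point of `T₀⁺ = {(x,y) : x > 1, y > a}` has forward orbit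
under `f_a` tending to infinity: both coordinates of `f_a^n(x,y)` tend to `+∞`. -/
theorem T0_orbits_tend_to_infinity (a : ℝ) (ha : 1 < a) (p : ℝ × ℝ)
    (h1 : 1 < p.1) (h2 : a < p.2) :
    Tendsto (fun n : ℕ => ((fa a)^[n] p).1) atTop atTop ∧
    Tendsto (fun n : ℕ => ((fa a)^[n] p).2) atTop atTop := by
  set P : ℕ → ℝ × ℝ := fun n => (fa a)^[n] p with hP
  have hsucc : ∀ n, P (n + 1) = fa a (P n) := by
    intro n; simp [hP, Function.iterate_succ_apply']
  have inv : ∀ n, 1 < (P n).1 ∧ a < (P n).2 := by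
    intro n
    induction n with
    | zero => exact ⟨h1, h2⟩
    | succ k ih =>
      obtain ⟨hx, hy⟩ := ih
      rw [hsucc k]
      set x := (P k).1
      set y := (P k).2
      constructor
      · show 1 < y * (x + a) / (x - 1)
        rw [lt_div_iff₀ (by linarith)]
        nlinarith
      · show a < x + a - 1
        linarith
  have step1 : ∀ n, (P n).2 < (P (n + 1)).1 := by
    intro n
    obtain ⟨hx, hy⟩ := inv n
    rw [hsucc n]
    show (P n).2 < (P n).2 * ((P n).1 + a) / ((P n).1 - 1)
    rw [lt_div_iff₀ (by linarith)]
    nlinarith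
  have step2 : ∀ n, (P (n + 1)).2 = (P n).1 + a - 1 := by
    intro n; rw [hsucc n]; rfl
  have hc : (0 : ℝ) < a - 1 := by linarith
  constructor
  · apply grow_tendsto _ (a - 1) hc
    intro n
    have := step1 (n + 1)
    rw [step2 n] at this
    linarith
  · apply grow_tendsto _ (a - 1) hc
    intro n
    have h := step2 (n + 1)
    have := step1 n
    rw [h]
    linarith
end

section
/- For a > 1, the set A = {(x,y) : x > 1, y < -x} and its preimage satisfy A ∩ f_a^{-1}(A) = ∅; that is, no point (x,y) with x > 1 and y < -x has f_a(x,y) also satisfying those inequalities. -/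
/-- For `a > 1`, with `A = {(x,y) : x > 1, y < -x}`, we have `A ∩ f_a⁻¹(A) = ∅`:
no point of `A` maps into `A`. -/
theorem A_inter_preimage_empty (a : ℝ) (ha : 1 < a) (x y : ℝ)
    (hx : 1 < x) (hy : y < -x) :
    ¬(1 < (fa a (x, y)).1 ∧ (fa a (x, y)).2 < -(fa a (x, y)).1) := by
  rintro ⟨h1, _⟩
  simp only [fa] at h1
  have : y * (x + a) / (x - 1) < 0 :=
    div_neg_of_neg_of_pos (by nlinarith) (by linarith)
  linarith
end

section
/- For a > 1, in the adapted coordinates on S₂ and S₃, f_a maps S₂ into S₃ ∪ (the escape region): if 0 ≤ y₂ and 0 ≤ x₂ ≤ y₂ + (a+1)/2, then (x₃, y₃) = ((−1 + a² + 2y₂(x₂ + a − 1))/(2(y₂ + a + 1)), y₂) satisfies x₃ ≥ 0, y₃ ≥ 0, and y₃ + (a+1)/2 − x₃ > 0. -/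
/-- For `a > 1`, in adapted coordinates, `f_a` maps `S₂` into `S₃` (or the escape
region): if `0 ≤ y₂` and `0 ≤ x₂ ≤ y₂ + (a+1)/2`, then
`(x₃, y₃) = ((−1 + a² + 2y₂(x₂ + a − 1))/(2(y₂ + a + 1)), y₂)` satisfies
`x₃ ≥ 0`, `y₃ ≥ 0` and `y₃ + (a+1)/2 − x₃ > 0`. -/
theorem fa_maps_S2_to_S3 (a : ℝ) (ha : 1 < a) (x₂ y₂ : ℝ)
    (hy₂ : 0 ≤ y₂) (hx₂ : 0 ≤ x₂) (hx₂' : x₂ ≤ y₂ + (a + 1) / 2) :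
    let x₃ := (-1 + a ^ 2 + 2 * y₂ * (x₂ + a - 1)) / (2 * (y₂ + a + 1))
    let y₃ := y₂
    0 ≤ x₃ ∧ 0 ≤ y₃ ∧ 0 < y₃ + (a + 1) / 2 - x₃ := by
  intro x₃ y₃
  have hd : 0 < 2 * (y₂ + a + 1) := by linarith
  refine ⟨div_nonneg (by nlinarith) hd.le, hy₂, ?_⟩
  have hlt : (-1 + a ^ 2 + 2 * y₂ * (x₂ + a - 1)) / (2 * (y₂ + a + 1))
      < y₂ + (a + 1) / 2 := by
    rw [div_lt_iff₀ hd]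
    nlinarith
  show (0:ℝ) < y₂ + (a + 1) / 2 - x₃
  simpa [x₃] using sub_pos.mpr hlt
end
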